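/- Let T > 0, γ > 0, ζ ∈ ℝ, and define θ0(s) := (1 + ζ·exp(2γ(T−s)))/(1 − ζ·exp(2γ(T−s))) and Ψ0(t,s) := exp(−2γ(s−t))·((ζ·exp(2γT) − exp(2γs))/(ζ·exp(2γT) − exp(2γt)))². Fix t ≤ T and assume ζ·exp(2γT) ≠ exp(2γs) for every s ∈ [t,T]. Then ∫_t^T θ0(s)·Ψ0(t,s) ds = −[ (exp(2γt) − exp(2γT))·(exp(2γt) − ζ²·exp(2γT)) ] / (2γ·(exp(2γt) − ζ·exp(2γT))²). -/

import Mathlib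

open Real Set MeasureTheory

theorem stmt_10 (T γ ζ : ℝ) (hT : 0 < T) (hγ : 0 < γ)
    (θ0 : ℝ → ℝ)
    (hθ0 : ∀ s, θ0 s = (1 + ζ * Real.exp (2 * γ * (T - s))) /
                       (1 - ζ * Real.exp (2 * γ * (T - s))))
    (Ψ0 : ℝ → ℝ → ℝ)
    (hΨ0 : ∀ t s, Ψ0 t s = Real.exp (-2 * γ * (s - t)) *
        ((ζ * Real.exp (2 * γ * T) - Real.exp (2 * γ * s)) /
         (ζ * Real.exp (2 * γ * T) - Real.exp (2 * γ * t))) ^ 2)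
    (t : ℝ) (htT : t ≤ T)
    (hnd : ∀ s ∈ Set.Icc t T, ζ * Real.exp (2 * γ * T) ≠ Real.exp (2 * γ * s)) :
    ∫ s in t..T, θ0 s * Ψ0 t s =
      -(((Real.exp (2 * γ * t) - Real.exp (2 * γ * T)) *
          (Real.exp (2 * γ * t) - ζ ^ 2 * Real.exp (2 * γ * T))) /
        (2 * γ * (Real.exp (2 * γ * t) - ζ * Real.exp (2 * γ * T)) ^ 2)) := by
  have hγ2 : (2:ℝ) * γ ≠ 0 := by positivity
  set a : ℝ := ζ * Real.exp (2 * γ * T) with ha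
  have ht0 : Real.exp (2 * γ * t) - a ≠ 0 :=
    sub_ne_zero.mpr (Ne.symm (hnd t ⟨le_refl t, htT⟩))
  have hta : a - Real.exp (2 * γ * t) ≠ 0 := sub_ne_zero.mpr (hnd t ⟨le_refl t, htT⟩)
  set C : ℝ := Real.exp (2 * γ * t) / ((Real.exp (2 * γ * t) - a) ^ 2 * (2 * γ)) with hC
  set F : ℝ → ℝ := fun s => C * (Real.exp (2 * γ * s) + a ^ 2 * Real.exp (-(2 * γ * s))) with hF
  have hexpTs : ∀ s : ℝ, Real.exp (2 * γ * (T - s)) = Real.exp (2 * γ * T) / Real.exp (2 * γ * s) := by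
    intro s; rw [← Real.exp_sub]; ring_nf
  have hd1 : ∀ s ∈ Set.Icc t T, (1 : ℝ) - ζ * Real.exp (2 * γ * (T - s)) ≠ 0 := by
    intro s hs h
    apply hnd s hs
    rw [hexpTs s] at h
    have hes := Real.exp_ne_zero (2 * γ * s)
    field_simp at h
    linarith
  have hderiv : ∀ s ∈ Set.uIcc t T, HasDerivAt F (θ0 s * Ψ0 t s) s := by
    intro s hs
    rw [Set.uIcc_of_le htT] at hs
    have hsne : a ≠ Real.exp (2 * γ * s) := hnd s hs
    have hsa : Real.exp (2 * γ * s) - a ≠ 0 := sub_ne_zero.mpr (Ne.symm hsne)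
    have hd1s := hd1 s hs
    have hes := Real.exp_ne_zero (2 * γ * s)
    have het := Real.exp_ne_zero (2 * γ * t)
    have h1 : HasDerivAt (fun x : ℝ => Real.exp (2 * γ * x)) (Real.exp (2 * γ * s) * (2 * γ)) s := by
      have := ((hasDerivAt_id s).const_mul (2 * γ)).exp
      simpa using this
    have h2 : HasDerivAt (fun x : ℝ => Real.exp (-(2 * γ * x))) (Real.exp (-(2 * γ * s)) * (-(2 * γ))) s := by
      have := ((hasDerivAt_id s).const_mul (-(2 * γ))).exp
      simpa [neg_mul] using this
    have h3 : HasDerivAt F (C * (Real.exp (2 * γ * s) * (2 * γ) +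
        a ^ 2 * (Real.exp (-(2 * γ * s)) * (-(2 * γ))))) s :=
      ((h1.add ((h2.const_mul (a ^ 2)))).const_mul C)
    convert h3 using 1
    have hd1' : (1 : ℝ) - ζ * (Real.exp (2 * γ * T) / Real.exp (2 * γ * s)) ≠ 0 := by
      rw [← hexpTs s]; exact hd1s
    have hθs : θ0 s = (Real.exp (2 * γ * s) + a) / (Real.exp (2 * γ * s) - a) := by
      rw [hθ0, hexpTs]
      rw [div_eq_div_iff hd1' hsa]
      field_simp
      rw [ha]
    have h4 : Real.exp (-2 * γ * (s - t)) = Real.exp (2 * γ * t) / Real.exp (2 * γ * s) := by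
      rw [← Real.exp_sub]; ring_nf
    have h5 : Real.exp (-(2 * γ * s)) = 1 / Real.exp (2 * γ * s) := by
      rw [Real.exp_neg]; ring
    rw [hθs, hΨ0, hC, h4, h5]
    field_simp
    ring
  have hcont : ContinuousOn (fun s => θ0 s * Ψ0 t s) (Set.uIcc t T) := by
    rw [Set.uIcc_of_le htT]
    have hθ : ContinuousOn θ0 (Set.Icc t T) := by
      have : θ0 = fun s => (1 + ζ * Real.exp (2 * γ * (T - s))) /
          (1 - ζ * Real.exp (2 * γ * (T - s))) := funext hθ0
      rw [this]
      apply ContinuousOn.div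
      · fun_prop
      · fun_prop
      · exact hd1
    have hΨ : ContinuousOn (fun s => Ψ0 t s) (Set.Icc t T) := by
      have : (fun s => Ψ0 t s) = fun s => Real.exp (-2 * γ * (s - t)) *
          ((ζ * Real.exp (2 * γ * T) - Real.exp (2 * γ * s)) /
           (ζ * Real.exp (2 * γ * T) - Real.exp (2 * γ * t))) ^ 2 := funext (hΨ0 t)
      rw [this]
      fun_prop
    exact hθ.mul hΨ
  have hint : IntervalIntegrable (fun s => θ0 s * Ψ0 t s) MeasureTheory.volume t T :=
    hcont.intervalIntegrable
  rw [intervalIntegral.integral_eq_sub_of_hasDerivAt hderiv hint]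
  have heT := Real.exp_ne_zero (2 * γ * T)
  have het := Real.exp_ne_zero (2 * γ * t)
  have ht0' : Real.exp (2 * γ * t) - ζ * Real.exp (2 * γ * T) ≠ 0 := ht0
  have h5 : ∀ s : ℝ, Real.exp (-(2 * γ * s)) = 1 / Real.exp (2 * γ * s) := by
    intro s; rw [Real.exp_neg]; ring
  simp only [hF, hC, h5, ha]
  field_simp
  ring
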